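/- Let Q ⊂ P^2 be the conic defined by x_0 x_1 + x_0 x_2 + x_1 x_2 = 0. Then for any a, b ∈ C with ab ≠ 0, the point (a : b : 0) cannot be written as the Hadamard product of two points on Q; that is, there exist no points (x_0:x_1:x_2), (y_0:y_1:y_2) ∈ Q with (x_0 y_0 : x_1 y_1 : x_2 y_2) = (a : b : 0). -/

import Mathlib

/-- Let `Q ⊂ ℙ²` be the conic `x₀x₁ + x₀x₂ + x₁x₂ = 0`.  For any `a, b ∈ ℂ` with
`ab ≠ 0`, the point `(a : b : 0)` is not the Hadamard product of two points of `Q`: there are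
no points `(x₀:x₁:x₂), (y₀:y₁:y₂) ∈ Q` with `(x₀y₀ : x₁y₁ : x₂y₂) = (a : b : 0)`. -/
theorem conic_hadamard_product_misses_boundary (a b : ℂ) (ha : a ≠ 0) (hb : b ≠ 0) :
    ¬ ∃ x₀ x₁ x₂ y₀ y₁ y₂ c : ℂ,
      ¬ (x₀ = 0 ∧ x₁ = 0 ∧ x₂ = 0) ∧
      ¬ (y₀ = 0 ∧ y₁ = 0 ∧ y₂ = 0) ∧
      x₀ * x₁ + x₀ * x₂ + x₁ * x₂ = 0 ∧
      y₀ * y₁ + y₀ * y₂ + y₁ * y₂ = 0 ∧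
      c ≠ 0 ∧ x₀ * y₀ = c * a ∧ x₁ * y₁ = c * b ∧ x₂ * y₂ = c * 0 := by
  rintro ⟨x₀, x₁, x₂, y₀, y₁, y₂, c, -, -, hx, hy, hc, h0, h1, h2⟩
  rw [mul_zero] at h2
  rcases mul_eq_zero.mp h2 with h | h
  · subst h
    simp only [mul_zero, add_zero, zero_mul] at hx
    rcases mul_eq_zero.mp hx with h | h
    · subst h; rw [zero_mul] at h0; exact ha (by field_simp at h0; exact (mul_eq_zero.mp h0.symm).resolve_left hc)
    · subst h; rw [zero_mul] at h1; exact hb (by field_simp at h1; exact (mul_eq_zero.mp h1.symm).resolve_left hc)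
  · subst h
    simp only [mul_zero, add_zero, zero_mul] at hy
    rcases mul_eq_zero.mp hy with h | h
    · subst h; rw [mul_zero] at h0; exact ha (by field_simp at h0; exact (mul_eq_zero.mp h0.symm).resolve_left hc)
    · subst h; rw [mul_zero] at h1; exact hb (by field_simp at h1; exact (mul_eq_zero.mp h1.symm).resolve_left hc)
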